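/- For subsets A, B ⊆ ℤ/nℤ with |A| = |B| = k, there is a unique stream S = st₀(A,B) such that exactly k elements (i,j) of S satisfy 1 ≤ i ≤ n and 1 ≤ j ≤ n. Explicitly, if a₁ < ⋯ < a_k and b₁ < ⋯ < b_k are the representatives in {1,…,n} of the classes in A and B respectively, then S = {(a_r + tn, b_r + tn) : 1 ≤ r ≤ k, t ∈ ℤ}. -/

import Mathlib

/-- A stream: an `(n,n)`-translation-invariant chain in the southeast order. -/
def IsStream (n : ℕ) (S : Set (ℤ × ℤ)) : Prop :=
  (∀ p : ℤ × ℤ, p ∈ S ↔ ((p.1 + n, p.2 + n) : ℤ × ℤ) ∈ S) ∧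
  ∀ p ∈ S, ∀ q ∈ S, p ≠ q →
    (p.1 < q.1 ∧ p.2 < q.2) ∨ (q.1 < p.1 ∧ q.2 < p.2)

/-- An `(A,B)`-stream: the residues of rows give `A` and of columns give `B`. -/
def IsABStream (n : ℕ) (A B : Finset (ZMod n)) (S : Set (ℤ × ℤ)) : Prop :=
  IsStream n S ∧
  (∀ a : ZMod n, a ∈ A ↔ ∃ p ∈ S, ((p.1 : ZMod n) = a)) ∧
  (∀ b : ZMod n, b ∈ B ↔ ∃ p ∈ S, ((p.2 : ZMod n) = b))

/-- The explicit stream `st₀(A,B)`, pairing the representatives in `{1,…,n}` of `A`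
and `B` in increasing order (matched by rank). -/
def stZero (n : ℕ) (A B : Finset (ZMod n)) : Set (ℤ × ℤ) :=
  {p : ℤ × ℤ | ∃ a b t : ℤ, a ∈ Finset.Icc (1 : ℤ) n ∧ b ∈ Finset.Icc (1 : ℤ) n ∧
    (a : ZMod n) ∈ A ∧ (b : ZMod n) ∈ B ∧
    ((Finset.Icc (1 : ℤ) n).filter (fun x : ℤ => ((x : ZMod n) ∈ A ∧ x ≤ a))).card =
      ((Finset.Icc (1 : ℤ) n).filter (fun x : ℤ => ((x : ZMod n) ∈ B ∧ x ≤ b))).card ∧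
    p = (a + t * n, b + t * n)}

namespace StreamAux

variable {n : ℕ}

lemma cast_shift (x t : ℤ) : ((x + t * (n:ℤ) : ℤ) : ZMod n) = (x : ZMod n) := by
  push_cast
  simp

lemma exists_shift (hn : 0 < n) (x : ℤ) :
    ∃ t : ℤ, x + t * (n:ℤ) ∈ Finset.Icc (1:ℤ) (n:ℤ) := by
  have hn' : (0:ℤ) < n := by exact_mod_cast hn
  refine ⟨-((x-1)/n), ?_⟩
  have h1 := Int.emod_nonneg (x-1) hn'.ne'
  have h2 := Int.emod_lt_of_pos (x-1) hn'
  have h3 := Int.mul_ediv_add_emod (x-1) (n:ℤ)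
  simp only [Finset.mem_Icc]
  constructor <;> nlinarith [h3]

lemma cast_injOn (hn : 0 < n) {x y : ℤ} (hx : x ∈ Finset.Icc (1:ℤ) (n:ℤ))
    (hy : y ∈ Finset.Icc (1:ℤ) (n:ℤ)) (h : (x : ZMod n) = (y : ZMod n)) : x = y := by
  have hn' : (0:ℤ) < n := by exact_mod_cast hn
  simp only [Finset.mem_Icc] at hx hy
  have hmod : x ≡ y [ZMOD (n:ℕ)] := (ZMod.intCast_eq_intCast_iff x y n).mp h
  obtain ⟨c, hc⟩ := Int.ModEq.dvd hmod
  rcases lt_trichotomy c 0 with hcc|hcc|hcc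
  · nlinarith [mul_le_mul_of_nonneg_left (by linarith : c ≤ -1) hn'.le]
  · subst hcc; linarith [hc]
  · nlinarith [mul_le_mul_of_nonneg_left (by linarith : (1:ℤ) ≤ c) hn'.le]

lemma cast_surj (hn : 0 < n) (a : ZMod n) :
    ∃ x ∈ Finset.Icc (1:ℤ) (n:ℤ), (x : ZMod n) = a := by
  haveI : NeZero n := ⟨hn.ne'⟩
  obtain ⟨t, ht⟩ := exists_shift hn (a.val : ℤ)
  refine ⟨_, ht, ?_⟩
  rw [cast_shift]
  push_cast
  simp [ZMod.natCast_val, ZMod.cast_id]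

lemma shift_eq_zero (hn : 0 < n) {a t : ℤ} (ha : a ∈ Finset.Icc (1:ℤ) (n:ℤ))
    (h : a + t * n ∈ Finset.Icc (1:ℤ) (n:ℤ)) : t = 0 := by
  have hn' : (0:ℤ) < n := by exact_mod_cast hn
  simp only [Finset.mem_Icc] at ha h
  rcases lt_trichotomy t 0 with ht|ht|ht
  · nlinarith [mul_le_mul_of_nonneg_right (by linarith : t ≤ -1) hn'.le]
  · exact ht
  · nlinarith [mul_le_mul_of_nonneg_right (by linarith : (1:ℤ) ≤ t) hn'.le]

lemma lt_shift (hn : 0 < n) {a a' t t' : ℤ} (ha : a ∈ Finset.Icc (1:ℤ) (n:ℤ))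
    (ha' : a' ∈ Finset.Icc (1:ℤ) (n:ℤ)) (h : t < t') : a + t * n < a' + t' * n := by
  have hn' : (0:ℤ) < n := by exact_mod_cast hn
  simp only [Finset.mem_Icc] at ha ha'
  nlinarith [mul_le_mul_of_nonneg_right (by linarith : t + 1 ≤ t') hn'.le]

noncomputable def rk (F : Finset ℤ) (a : ℤ) : ℕ :=
  (F.filter (fun x => x ≤ a)).card

lemma rk_mono (F : Finset ℤ) {a a' : ℤ} (h : a ≤ a') : rk F a ≤ rk F a' :=
  Finset.card_le_card (Finset.monotone_filter_right _ (fun x _ hx => le_trans hx h))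

lemma rk_lt (F : Finset ℤ) {a a' : ℤ} (ha' : a' ∈ F) (h : a < a') : rk F a < rk F a' := by
  apply Finset.card_lt_card
  constructor
  · exact Finset.monotone_filter_right _ (fun x _ hx => le_trans hx h.le)
  · intro hsub
    have h1 : a' ∈ F.filter (fun x => x ≤ a) :=
      hsub (Finset.mem_filter.mpr ⟨ha', le_refl a'⟩)
    have := (Finset.mem_filter.mp h1).2
    linarith

lemma rk_lt_iff (F : Finset ℤ) {a a' : ℤ} (ha' : a' ∈ F) :
    a < a' ↔ rk F a < rk F a' := by
  constructor
  · exact rk_lt F ha'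
  · intro h
    by_contra h'
    push_neg at h'
    exact absurd (rk_mono F h') (not_le.mpr h)

lemma rk_injOn (F : Finset ℤ) {a a' : ℤ} (ha : a ∈ F) (ha' : a' ∈ F)
    (h : rk F a = rk F a') : a = a' := by
  rcases lt_trichotomy a a' with hl|hl|hl
  · exact absurd h (Nat.ne_of_lt (rk_lt F ha' hl))
  · exact hl
  · exact absurd h.symm (Nat.ne_of_lt (rk_lt F ha hl))

lemma rk_mem (F : Finset ℤ) {a : ℤ} (ha : a ∈ F) : rk F a ∈ Finset.Icc 1 F.card := by
  rw [Finset.mem_Icc]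
  constructor
  · exact Finset.card_pos.mpr ⟨a, Finset.mem_filter.mpr ⟨ha, le_refl a⟩⟩
  · exact Finset.card_le_card (Finset.filter_subset _ _)

lemma rk_surj (F : Finset ℤ) {m : ℕ} (hm : m ∈ Finset.Icc 1 F.card) :
    ∃ a ∈ F, rk F a = m := by
  have hinj : Set.InjOn (rk F) F := fun x hx y hy hxy => rk_injOn F hx hy hxy
  have himg : F.image (rk F) = Finset.Icc 1 F.card := by
    apply Finset.eq_of_subset_of_card_le
    · intro m' hm'
      obtain ⟨a, ha, rfl⟩ := Finset.mem_image.mp hm'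
      exact rk_mem F ha
    · rw [Finset.card_image_of_injOn hinj, Nat.card_Icc]
      omega
  rw [← himg] at hm
  obtain ⟨a, ha, h⟩ := Finset.mem_image.mp hm
  exact ⟨a, ha, h⟩

lemma rk_transport {F G : Finset ℤ} {g : ℤ → ℤ} (hmap : ∀ a ∈ F, g a ∈ G)
    (hmono : ∀ a ∈ F, ∀ a' ∈ F, a < a' → g a < g a') (hcard : F.card = G.card)
    {a : ℤ} (ha : a ∈ F) : rk G (g a) = rk F a := by
  have hinj : Set.InjOn g F := by
    intro x hx y hy hxy
    rcases lt_trichotomy x y with h|h|h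
    · exact absurd hxy (ne_of_lt (hmono x hx y hy h))
    · exact h
    · exact absurd hxy.symm (ne_of_lt (hmono y hy x hx h))
  have himg : F.image g = G := by
    apply Finset.eq_of_subset_of_card_le
    · intro y hy
      obtain ⟨x, hx, rfl⟩ := Finset.mem_image.mp hy
      exact hmap x hx
    · rw [Finset.card_image_of_injOn hinj]
      exact hcard.ge
  have hle : ∀ x ∈ F, (g x ≤ g a ↔ x ≤ a) := by
    intro x hx
    constructor
    · intro h
      by_contra h'
      push_neg at h'
      exact absurd (hmono a ha x hx h') (not_lt.mpr h)
    · intro h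
      rcases eq_or_lt_of_le h with rfl|h'
      · exact le_refl _
      · exact (hmono x hx a ha h').le
  have hfilter : G.filter (fun y => y ≤ g a) = (F.filter (fun x => x ≤ a)).image g := by
    ext y
    simp only [Finset.mem_filter, Finset.mem_image]
    constructor
    · rintro ⟨hyG, hy⟩
      rw [← himg] at hyG
      obtain ⟨x, hx, rfl⟩ := Finset.mem_image.mp hyG
      exact ⟨x, ⟨hx, (hle x hx).mp hy⟩, rfl⟩
    · rintro ⟨x, ⟨hx, hxa⟩, rfl⟩
      exact ⟨himg ▸ Finset.mem_image_of_mem g hx, (hle x hx).mpr hxa⟩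
  rw [rk, hfilter, Finset.card_image_of_injOn (hinj.mono (by
    intro x hx
    exact (Finset.mem_filter.mp hx).1))]
  rfl

noncomputable def FF (n : ℕ) (A : Finset (ZMod n)) : Finset ℤ :=
  (Finset.Icc (1:ℤ) (n:ℤ)).filter (fun x => (x : ZMod n) ∈ A)

lemma mem_FF_Icc {A : Finset (ZMod n)} {a : ℤ} (ha : a ∈ FF n A) :
    a ∈ Finset.Icc (1:ℤ) (n:ℤ) := (Finset.mem_filter.mp ha).1

lemma mem_stZero {A B : Finset (ZMod n)} {p : ℤ × ℤ} :
    p ∈ stZero n A B ↔ ∃ a b t : ℤ, a ∈ FF n A ∧ b ∈ FF n B ∧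
      rk (FF n A) a = rk (FF n B) b ∧ p = (a + t * (n:ℤ), b + t * (n:ℤ)) := by
  simp only [stZero, Set.mem_setOf_eq, FF, rk, Finset.filter_filter, Finset.mem_filter]
  constructor
  · rintro ⟨a,b,t,h1,h2,h3,h4,h5,h6⟩
    exact ⟨a,b,t,⟨h1,h3⟩,⟨h2,h4⟩,h5,h6⟩
  · rintro ⟨a,b,t,⟨h1,h3⟩,⟨h2,h4⟩,h5,h6⟩
    exact ⟨a,b,t,h1,h2,h3,h4,h5,h6⟩

lemma card_FF (hn : 0 < n) (A : Finset (ZMod n)) : (FF n A).card = A.card := by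
  refine Finset.card_bij (i := fun (x : ℤ) _ => (x : ZMod n)) ?_ ?_ ?_
  · intro x hx
    exact (Finset.mem_filter.mp hx).2
  · intro x hx y hy h
    exact cast_injOn hn (Finset.mem_filter.mp hx).1 (Finset.mem_filter.mp hy).1 h
  · intro b hb
    obtain ⟨x, hx, hxb⟩ := cast_surj hn b
    exact ⟨x, Finset.mem_filter.mpr ⟨hx, hxb ▸ hb⟩, hxb⟩

lemma exists_matched {F G : Finset ℤ} (hc : F.card = G.card) {a : ℤ} (ha : a ∈ F) :
    ∃ b ∈ G, rk G b = rk F a := by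
  apply rk_surj
  have := rk_mem F ha
  rwa [hc] at this

end StreamAux

open StreamAux

theorem stmt2 (n k : ℕ) (hn : 0 < n) (A B : Finset (ZMod n))
    (hA : A.card = k) (hB : B.card = k) :
    (IsABStream n A B (stZero n A B) ∧
      (stZero n A B ∩ Set.Icc (1 : ℤ) n ×ˢ Set.Icc (1 : ℤ) n).ncard = k) ∧
    ∀ S : Set (ℤ × ℤ), IsABStream n A B S →
      (S ∩ Set.Icc (1 : ℤ) n ×ˢ Set.Icc (1 : ℤ) n).ncard = k → S = stZero n A B := by
  classical
  have hAB : (FF n A).card = (FF n B).card := by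
    rw [card_FF hn, card_FF hn, hA, hB]
  -- Part 1: stZero is a stream
  have hinv : ∀ p : ℤ × ℤ, p ∈ stZero n A B ↔
      ((p.1 + n, p.2 + n) : ℤ × ℤ) ∈ stZero n A B := by
    intro p
    rw [mem_stZero, mem_stZero]
    constructor
    · rintro ⟨a,b,t,h1,h2,h3,rfl⟩
      exact ⟨a,b,t+1,h1,h2,h3, by simp only [Prod.mk.injEq]; constructor <;> ring⟩
    · rintro ⟨a,b,t,h1,h2,h3,heq⟩
      refine ⟨a,b,t-1,h1,h2,h3, ?_⟩
      have e1 : p.1 + n = a + t * n := congrArg Prod.fst heq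
      have e2 : p.2 + n = b + t * n := congrArg Prod.snd heq
      have f1 : p.1 = a + (t-1) * (n:ℤ) := by linear_combination e1
      have f2 : p.2 = b + (t-1) * (n:ℤ) := by linear_combination e2
      exact Prod.ext f1 f2
  have hchain : ∀ p ∈ stZero n A B, ∀ q ∈ stZero n A B, p ≠ q →
      (p.1 < q.1 ∧ p.2 < q.2) ∨ (q.1 < p.1 ∧ q.2 < p.2) := by
    rintro p hp q hq hne
    rw [mem_stZero] at hp hq
    obtain ⟨a,b,t,ha,hb,hr,rfl⟩ := hp
    obtain ⟨a',b',t',ha',hb',hr',rfl⟩ := hq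
    have haI := mem_FF_Icc ha
    have hbI := mem_FF_Icc hb
    have ha'I := mem_FF_Icc ha'
    have hb'I := mem_FF_Icc hb'
    rcases lt_trichotomy t t' with ht|ht|ht
    · exact Or.inl ⟨lt_shift hn haI ha'I ht, lt_shift hn hbI hb'I ht⟩
    · subst ht
      rcases lt_trichotomy a a' with hlt|he|hlt
      · left
        have hblt : b < b' := by
          rw [rk_lt_iff (FF n B) hb']
          rw [← hr, ← hr']
          exact rk_lt (FF n A) ha' hlt
        exact ⟨by simpa using hlt, by simpa using hblt⟩
      · exfalso
        subst he
        have : b = b' := rk_injOn (FF n B) hb hb' (hr ▸ hr' ▸ rfl)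
        subst this
        exact hne rfl
      · right
        have hblt : b' < b := by
          rw [rk_lt_iff (FF n B) hb]
          rw [← hr, ← hr']
          exact rk_lt (FF n A) ha hlt
        exact ⟨by simpa using hlt, by simpa using hblt⟩
    · exact Or.inr ⟨lt_shift hn ha'I haI ht, lt_shift hn hb'I hbI ht⟩
  have hrowA : ∀ a : ZMod n, a ∈ A ↔ ∃ p ∈ stZero n A B, ((p.1 : ZMod n) = a) := by
    intro a0
    constructor
    · intro haA
      obtain ⟨x, hx, hxa⟩ := cast_surj hn a0
      have hxF : x ∈ FF n A := Finset.mem_filter.mpr ⟨hx, by rw [hxa]; exact haA⟩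
      obtain ⟨b, hbF, hrb⟩ := exists_matched hAB hxF
      refine ⟨(x + 0 * (n:ℤ), b + 0 * (n:ℤ)),
        mem_stZero.mpr ⟨x, b, 0, hxF, hbF, hrb.symm, rfl⟩, ?_⟩
      simpa using hxa
    · rintro ⟨p, hp, hpa⟩
      rw [mem_stZero] at hp
      obtain ⟨a,b,t,haF,hbF,hr,rfl⟩ := hp
      have : ((a + t * (n:ℤ) : ℤ) : ZMod n) = (a : ZMod n) := cast_shift a t
      rw [← hpa]
      simp only at this ⊢
      rw [this]
      exact (Finset.mem_filter.mp haF).2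
  have hcolB : ∀ b : ZMod n, b ∈ B ↔ ∃ p ∈ stZero n A B, ((p.2 : ZMod n) = b) := by
    intro b0
    constructor
    · intro hbB
      obtain ⟨y, hy, hyb⟩ := cast_surj hn b0
      have hyF : y ∈ FF n B := Finset.mem_filter.mpr ⟨hy, by rw [hyb]; exact hbB⟩
      obtain ⟨a, haF, hra⟩ := exists_matched hAB.symm hyF
      refine ⟨(a + 0 * (n:ℤ), y + 0 * (n:ℤ)),
        mem_stZero.mpr ⟨a, y, 0, haF, hyF, hra, rfl⟩, ?_⟩
      simpa using hyb
    · rintro ⟨p, hp, hpb⟩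
      rw [mem_stZero] at hp
      obtain ⟨a,b,t,haF,hbF,hr,rfl⟩ := hp
      have : ((b + t * (n:ℤ) : ℤ) : ZMod n) = (b : ZMod n) := cast_shift b t
      rw [← hpb]
      simp only at this ⊢
      rw [this]
      exact (Finset.mem_filter.mp hbF).2
  -- Part 1: cardinality
  have hbox : stZero n A B ∩ Set.Icc (1 : ℤ) n ×ˢ Set.Icc (1 : ℤ) n
      = (((((FF n A) ×ˢ (FF n B)).filter
          (fun q : ℤ × ℤ => rk (FF n A) q.1 = rk (FF n B) q.2)) : Finset (ℤ×ℤ)) :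
            Set (ℤ×ℤ)) := by
    ext p
    simp only [Set.mem_inter_iff, Set.mem_prod, Set.mem_Icc, Finset.coe_filter,
      Set.mem_setOf_eq, Finset.mem_product, mem_stZero]
    constructor
    · rintro ⟨⟨a,b,t,haF,hbF,hr,rfl⟩, hbox1, hbox2⟩
      have ht : t = 0 := shift_eq_zero hn (mem_FF_Icc haF)
        (Finset.mem_Icc.mpr (by simpa using hbox1))
      subst ht
      simp only [zero_mul, add_zero]
      exact ⟨⟨haF, hbF⟩, hr⟩
    · rintro ⟨⟨h1,h2⟩,h3⟩
      have hI1 := Finset.mem_Icc.mp (mem_FF_Icc h1)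
      have hI2 := Finset.mem_Icc.mp (mem_FF_Icc h2)
      exact ⟨⟨p.1, p.2, 0, h1, h2, h3, by simp⟩, hI1, hI2⟩
  have hcount : (stZero n A B ∩ Set.Icc (1 : ℤ) n ×ˢ Set.Icc (1 : ℤ) n).ncard = k := by
    rw [hbox, Set.ncard_coe_finset]
    rw [show k = (FF n A).card by rw [card_FF hn, hA]]
    refine Finset.card_bij (i := fun (q : ℤ × ℤ) _ => q.1) ?_ ?_ ?_
    · intro q hq
      exact (Finset.mem_product.mp (Finset.mem_filter.mp hq).1).1
    · intro q hq q' hq' h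
      have h1 : q.1 = q'.1 := h
      obtain ⟨hqm, hqr⟩ := Finset.mem_filter.mp hq
      obtain ⟨hq'm, hq'r⟩ := Finset.mem_filter.mp hq'
      have h2 : q.2 = q'.2 := by
        apply rk_injOn (FF n B) (Finset.mem_product.mp hqm).2 (Finset.mem_product.mp hq'm).2
        rw [← hqr, ← hq'r, h1]
      exact Prod.ext h1 h2
    · intro a haF
      obtain ⟨b, hbF, hrb⟩ := exists_matched hAB haF
      exact ⟨(a, b), Finset.mem_filter.mpr ⟨Finset.mem_product.mpr ⟨haF, hbF⟩, hrb.symm⟩, rfl⟩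
  refine ⟨⟨⟨⟨hinv, hchain⟩, hrowA, hcolB⟩, hcount⟩, ?_⟩
  intro S hS hScard
  obtain ⟨⟨hSinv, hSchain⟩, hSA, hSB⟩ := hS
  have hshift : ∀ p ∈ S, ∀ t : ℤ, (p.1 + t * (n:ℤ), p.2 + t * (n:ℤ)) ∈ S := by
    intro p hp t
    induction t using Int.induction_on with
    | zero => simpa using hp
    | succ i ih =>
      have := (hSinv (p.1 + (i:ℤ) * n, p.2 + (i:ℤ) * n)).mp ih
      convert this using 2 <;> push_cast <;> ring
    | pred i ih =>
      refine (hSinv (p.1 + (-(i:ℤ)-1) * n, p.2 + (-(i:ℤ)-1) * n)).mpr ?_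
      convert ih using 2 <;> push_cast <;> ring
  have hfst_inj : ∀ p ∈ S, ∀ q ∈ S, p.1 = q.1 → p = q := by
    intro p hp q hq h
    by_contra hne
    rcases hSchain p hp q hq hne with ⟨h1,_⟩|⟨h1,_⟩
    · exact absurd h (ne_of_lt h1)
    · exact absurd h.symm (ne_of_lt h1)
  have hmemA : ∀ p ∈ S, ((p.1 : ℤ) : ZMod n) ∈ A := fun p hp => (hSA _).mpr ⟨p, hp, rfl⟩
  have hmemB : ∀ p ∈ S, ((p.2 : ℤ) : ZMod n) ∈ B := fun p hp => (hSB _).mpr ⟨p, hp, rfl⟩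
  have hex : ∀ a : ℤ, ∃ p : ℤ × ℤ, a ∈ FF n A → (p ∈ S ∧ p.1 = a) := by
    intro a
    by_cases ha : a ∈ FF n A
    · obtain ⟨haI, haA⟩ := Finset.mem_filter.mp ha
      obtain ⟨p, hp, hpa⟩ := (hSA _).mp haA
      obtain ⟨t, ht⟩ := exists_shift hn p.1
      refine ⟨(p.1 + t * n, p.2 + t * n), fun _ => ⟨hshift p hp t, ?_⟩⟩
      exact cast_injOn hn ht haI (by rw [cast_shift, hpa])
    · exact ⟨(0,0), fun h => absurd h ha⟩
  choose f hf using hex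
  have hfS : ∀ a ∈ FF n A, f a ∈ S := fun a ha => (hf a ha).1
  have hf1 : ∀ a ∈ FF n A, (f a).1 = a := fun a ha => (hf a ha).2
  have hsub : S ∩ Set.Icc (1 : ℤ) n ×ˢ Set.Icc (1 : ℤ) n ⊆ f '' ((FF n A : Finset ℤ) : Set ℤ) := by
    rintro p ⟨hpS, hp1, hp2⟩
    rw [Set.mem_Icc] at hp1
    have hpF : p.1 ∈ FF n A :=
      Finset.mem_filter.mpr ⟨Finset.mem_Icc.mpr hp1, hmemA p hpS⟩
    exact ⟨p.1, by simpa using hpF, hfst_inj _ (hfS _ hpF) _ hpS (hf1 _ hpF)⟩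
  have hfin : (f '' ((FF n A : Finset ℤ) : Set ℤ)).Finite := ((FF n A).finite_toSet).image f
  have hcard_le : (f '' ((FF n A : Finset ℤ) : Set ℤ)).ncard ≤ k := by
    calc (f '' ((FF n A : Finset ℤ) : Set ℤ)).ncard
        ≤ ((FF n A : Finset ℤ) : Set ℤ).ncard := Set.ncard_image_le ((FF n A).finite_toSet)
      _ = k := by rw [Set.ncard_coe_finset, card_FF hn, hA]
  have hboxeq : S ∩ Set.Icc (1 : ℤ) n ×ˢ Set.Icc (1 : ℤ) n = f '' ((FF n A : Finset ℤ) : Set ℤ) := by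
    apply Set.eq_of_subset_of_ncard_le hsub _ hfin
    rw [hScard]
    exact hcard_le
  have hfbox : ∀ a ∈ FF n A, (f a).2 ∈ Finset.Icc (1:ℤ) (n:ℤ) := by
    intro a ha
    have hmem : f a ∈ S ∩ Set.Icc (1 : ℤ) n ×ˢ Set.Icc (1 : ℤ) n := by
      rw [hboxeq]
      exact ⟨a, by simpa using ha, rfl⟩
    rw [Finset.mem_Icc]
    exact Set.mem_Icc.mp hmem.2.2
  have hgF : ∀ a ∈ FF n A, (f a).2 ∈ FF n B := fun a ha =>
    Finset.mem_filter.mpr ⟨hfbox a ha, hmemB _ (hfS a ha)⟩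
  have hgmono : ∀ a ∈ FF n A, ∀ a' ∈ FF n A, a < a' → (f a).2 < (f a').2 := by
    intro a ha a' ha' hlt
    have hne : f a ≠ f a' := by
      intro h
      rw [← hf1 a ha, ← hf1 a' ha', h] at hlt
      exact lt_irrefl _ hlt
    rcases hSchain _ (hfS a ha) _ (hfS a' ha') hne with ⟨_,h2⟩|⟨h1,_⟩
    · exact h2
    · rw [hf1 a ha, hf1 a' ha'] at h1
      exact absurd hlt (not_lt.mpr h1.le)
  have hrkg : ∀ a ∈ FF n A, rk (FF n B) (f a).2 = rk (FF n A) a := fun a ha =>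
    rk_transport hgF hgmono hAB ha
  ext p
  rw [mem_stZero]
  constructor
  · intro hpS
    obtain ⟨t, ht⟩ := exists_shift hn p.1
    set q : ℤ × ℤ := (p.1 + t * n, p.2 + t * n) with hqdef
    have hqS : q ∈ S := hshift p hpS t
    have hqF : q.1 ∈ FF n A := Finset.mem_filter.mpr ⟨ht, hmemA q hqS⟩
    have hq : q = f q.1 := hfst_inj _ hqS _ (hfS _ hqF) (hf1 _ hqF).symm
    refine ⟨q.1, (f q.1).2, -t, hqF, hgF _ hqF, (hrkg _ hqF).symm, ?_⟩
    have h2 : q.2 = (f q.1).2 := by rw [← hq]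
    have e1 : p.1 = q.1 + (-t) * (n:ℤ) := by simp [hqdef]; try ring
    have e2 : p.2 = (f q.1).2 + (-t) * (n:ℤ) := by rw [← h2]; simp [hqdef]; try ring
    exact Prod.ext e1 e2
  · rintro ⟨a, b, t, haF, hbF, hr, rfl⟩
    have hb : b = (f a).2 :=
      rk_injOn (FF n B) hbF (hgF a haF) (by rw [← hr, hrkg a haF])
    have hfa : f a ∈ S := hfS a haF
    have := hshift (f a) hfa t
    rw [hf1 a haF, ← hb] at this
    exact this
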